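/- There exists n₀ such that the sequence of central Delannoy numbers d_n = ∑_{k=0}^n C(n,k) C(n+k,k) satisfies: (d_{n+1}^{1/(n+1)} / d_n^{1/n})_{n ≥ n₀} is strictly decreasing. -/

import Mathlib

set_option maxHeartbeats 1600000

/-- The `n`-th central Delannoy number `d_n = ∑_{k=0}^{n} C(n,k) C(n+k,k)`. -/
def delannoy (n : ℕ) : ℕ :=
  ∑ k ∈ Finset.range (n + 1), n.choose k * (n + k).choose k

lemma delannoy_pos (n : ℕ) : 0 < delannoy n := by
  apply Finset.sum_pos'
  · intro i _; positivity
  · exact ⟨0, Finset.mem_range.2 (Nat.succ_pos n), by simp⟩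

lemma delannoy_one : delannoy 1 = 3 := by decide
lemma delannoy_two : delannoy 2 = 13 := by decide

lemma cast1 (m k : ℕ) : ((m:ℝ)+1) * (m.choose k) = ((m:ℝ)+1-k) * ((m+1).choose k) := by
  rcases le_or_gt k (m+1) with h | h
  · have h2 : ((m.choose k * (m+1) : ℕ) : ℝ) = (((m+1).choose k * (m+1-k) : ℕ) : ℝ) := by
      rw [Nat.choose_mul_succ_eq m k]
    push_cast [Nat.cast_sub h] at h2
    linarith
  · rw [Nat.choose_eq_zero_of_lt (by omega), Nat.choose_eq_zero_of_lt (by omega)]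
    simp

lemma cast2 (m k : ℕ) : ((m:ℝ)+1) * (m.choose k) = ((k:ℝ)+1) * ((m+1).choose (k+1)) := by
  have h2 : (((m+1) * m.choose k : ℕ) : ℝ) = (((m+1).choose (k+1) * (k+1) : ℕ) : ℝ) := by
    rw [Nat.add_one_mul_choose_eq m k]
  push_cast at h2
  linarith

/-- per-k certificate identity -/
lemma step_id (n k : ℕ) :
    ((n:ℝ)+1)*((n:ℝ)+2)*( ((n:ℝ)+2) * (((n+2).choose k : ℝ) * ((n+2+k).choose k : ℝ))
        + ((n:ℝ)+1) * ((n.choose k : ℝ) * ((n+k).choose k : ℝ)) )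
      + 2*(2*(n:ℝ)+3) * ((k:ℝ)+1)^2 * ((n+2).choose (k+1) : ℝ) * ((n+(k+1)).choose (k+1) : ℝ)
    = ((n:ℝ)+1)*((n:ℝ)+2)*( 3*(2*(n:ℝ)+3) * (((n+1).choose k : ℝ) * ((n+1+k).choose k : ℝ)) )
      + 2*(2*(n:ℝ)+3) * (k:ℝ)^2 * ((n+2).choose k : ℝ) * ((n+k).choose k : ℝ) := by
  have h1 := cast1 n k
  have h2 := cast1 (n+1) k
  have h3 := cast1 (n+k) k
  have h4 := cast1 (n+k+1) k
  have h5 := cast2 (n+1) k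
  have h6 := cast2 (n+k) k
  push_cast at h1 h2 h3 h4 h5 h6
  set A0 : ℝ := (n.choose k : ℝ)
  set A1 : ℝ := ((n+1).choose k : ℝ)
  set A2 : ℝ := ((n+2).choose k : ℝ)
  set B0 : ℝ := ((n+k).choose k : ℝ)
  set B1 : ℝ := ((n+k+1).choose k : ℝ)
  set B2 : ℝ := ((n+k+2).choose k : ℝ)
  set A2' : ℝ := ((n+2).choose (k+1) : ℝ)
  set B1' : ℝ := ((n+k+1).choose (k+1) : ℝ)
  have e1 : (n+2+k : ℕ) = (n+k+2 : ℕ) := by ring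
  have e2 : (n+1+k : ℕ) = (n+k+1 : ℕ) := by ring
  have e3 : (n+(k+1) : ℕ) = (n+k+1 : ℕ) := by ring
  rw [e1, e2, e3]
  -- P1 : (n+1)(n+2) A2 B2 = (n+k+1)(n+k+2) A2 B0
  have P1 : ((n:ℝ)+1)*((n:ℝ)+2)*(A2*B2) = ((n:ℝ)+(k:ℝ)+1)*((n:ℝ)+(k:ℝ)+2)*(A2*B0) := by
    linear_combination (-((n:ℝ)+1)*A2) * h4 + (-((n:ℝ)+(k:ℝ)+2)*A2) * h3
  have P2 : ((n:ℝ)+1)*((n:ℝ)+2)*(A0*B0) = ((n:ℝ)+1-(k:ℝ))*((n:ℝ)+2-(k:ℝ))*(A2*B0) := by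
    linear_combination (((n:ℝ)+2)*B0) * h1 + (((n:ℝ)+1-(k:ℝ))*B0) * h2
  have P3 : ((n:ℝ)+1)*((n:ℝ)+2)*(A1*B1) = ((n:ℝ)+2-(k:ℝ))*((n:ℝ)+(k:ℝ)+1)*(A2*B0) := by
    linear_combination (((n:ℝ)+1)*B1) * h2 + (-((n:ℝ)+2-(k:ℝ))*A2) * h3
  have P4 : ((k:ℝ)+1)^2*(A2'*B1') = ((n:ℝ)+2-(k:ℝ))*((n:ℝ)+(k:ℝ)+1)*(A2*B0) := by
    linear_combination (-((k:ℝ)+1)*B1') * h5 + (-((n:ℝ)+2)*A1) * h6 + (((n:ℝ)+(k:ℝ)+1)*B0) * h2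
  linear_combination ((n:ℝ)+2) * P1 + ((n:ℝ)+1) * P2 + (2*(2*(n:ℝ)+3)) * P4
    - (3*(2*(n:ℝ)+3)) * P3

/-- Three-term recurrence for central Delannoy numbers, in ℝ. -/
lemma delannoy_rec (n : ℕ) :
    ((n:ℝ)+2) * (delannoy (n+2) : ℝ) + ((n:ℝ)+1) * (delannoy n : ℝ)
      = 3*(2*(n:ℝ)+3) * (delannoy (n+1) : ℝ) := by
  have hne : ((n:ℝ)+1)*((n:ℝ)+2) ≠ 0 := by positivity
  set g : ℕ → ℝ := fun k =>
    2*(2*(n:ℝ)+3) * (k:ℝ)^2 * ((n+2).choose k : ℝ) * ((n+k).choose k : ℝ) with hg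
  have key : ∑ k ∈ Finset.range (n+3),
      ((((n:ℝ)+1)*((n:ℝ)+2)*((n:ℝ)+2)) * (((n+2).choose k : ℝ) * ((n+2+k).choose k : ℝ))
        + (((n:ℝ)+1)*((n:ℝ)+2)*((n:ℝ)+1)) * ((n.choose k : ℝ) * ((n+k).choose k : ℝ))
        + g (k+1))
      = ∑ k ∈ Finset.range (n+3),
      ((((n:ℝ)+1)*((n:ℝ)+2)*(3*(2*(n:ℝ)+3))) * (((n+1).choose k : ℝ) * ((n+1+k).choose k : ℝ))
        + g k) := by
    refine Finset.sum_congr rfl fun k _ => ?_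
    have h := step_id n k
    simp only [hg]
    push_cast
    push_cast at h
    linarith [h]
  simp only [Finset.sum_add_distrib, ← Finset.mul_sum] at key
  have tele : ∑ k ∈ Finset.range (n+3), g (k+1) = ∑ k ∈ Finset.range (n+3), g k := by
    have h0 : g 0 = 0 := by simp [hg]
    have htop : g (n+3) = 0 := by
      have : (n+2).choose (n+3) = 0 := Nat.choose_eq_zero_of_lt (by omega)
      simp [hg, this]
    have hA := Finset.sum_range_succ' g (n+3)
    rw [Finset.sum_range_succ g (n+3)] at hA
    rw [h0, htop] at hA
    linarith
  have hs2 : ∑ k ∈ Finset.range (n+3), (((n+2).choose k : ℝ) * ((n+2+k).choose k : ℝ))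
      = (delannoy (n+2) : ℝ) := by
    rw [delannoy]
    push_cast
    rfl
  have hs1 : ∑ k ∈ Finset.range (n+3), (((n+1).choose k : ℝ) * ((n+1+k).choose k : ℝ))
      = (delannoy (n+1) : ℝ) := by
    rw [Finset.sum_range_succ]
    have : (n+1).choose (n+2) = 0 := Nat.choose_eq_zero_of_lt (by omega)
    rw [this, delannoy]
    push_cast
    simp
  have hs0 : ∑ k ∈ Finset.range (n+3), ((n.choose k : ℝ) * ((n+k).choose k : ℝ))
      = (delannoy n : ℝ) := by
    rw [Finset.sum_range_succ, Finset.sum_range_succ]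
    have h1 : n.choose (n+2) = 0 := Nat.choose_eq_zero_of_lt (by omega)
    have h2 : n.choose (n+1) = 0 := Nat.choose_eq_zero_of_lt (by omega)
    rw [h1, h2, delannoy]
    push_cast
    simp
  rw [tele, hs2, hs1, hs0] at key
  apply mul_left_cancel₀ hne
  linarith [key]

noncomputable abbrev s2 : ℝ := Real.sqrt 2

lemma s2_sq : s2^2 = 2 := Real.sq_sqrt (by norm_num)
lemma s2_lb : (1.414:ℝ) ≤ s2 := by nlinarith [s2_sq, Real.sqrt_nonneg 2]
lemma s2_ub : s2 ≤ (1.415:ℝ) := by nlinarith [s2_sq, Real.sqrt_nonneg 2]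

lemma dpos (n : ℕ) : (0:ℝ) < (delannoy n : ℝ) := by exact_mod_cast delannoy_pos n

lemma ratio_bounds : ∀ n : ℕ, 1 ≤ n →
    (3+2*s2)*(2*(n:ℝ)-1) * (delannoy n : ℝ) ≤ 2*(n:ℝ) * (delannoy (n+1) : ℝ)
    ∧ 2*(n:ℝ)^2 * (delannoy (n+1) : ℝ)
        ≤ (3+2*s2)*(2*(n:ℝ)^2-(n:ℝ)+2) * (delannoy n : ℝ) := by
  intro n hn
  induction n, hn using Nat.le_induction with
  | base =>
      rw [delannoy_one, delannoy_two]
      norm_num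
      constructor
      · nlinarith [s2_ub]
      · nlinarith [s2_lb]
  | succ n hn ih =>
      obtain ⟨hl, hu⟩ := ih
      have hrec := delannoy_rec n
      set D0 : ℝ := (delannoy n : ℝ)
      set D1 : ℝ := (delannoy (n+1) : ℝ)
      set D2 : ℝ := (delannoy (n+2) : ℝ)
      have hD0 : 0 < D0 := dpos n
      have hD1 : 0 < D1 := dpos (n+1)
      have hD2 : 0 < D2 := dpos (n+2)
      have hn1 : (1:ℝ) ≤ (n:ℝ) := by exact_mod_cast hn
      have hs := s2_sq
      have hsl := s2_lb
      have hsu := s2_ub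
      have hm : (0:ℝ) ≤ (n:ℝ) - 1 := by linarith
      have h3s : (0:ℝ) ≤ 3 - 2*s2 := by linarith
      -- division-free inverted forms of the induction hypotheses
      have hl' : (2*(n:ℝ)-1) * D0 ≤ (3-2*s2) * (2*(n:ℝ) * D1) := by
        have h := mul_le_mul_of_nonneg_left hl h3s
        have e : (3-2*s2) * ((3+2*s2)*(2*(n:ℝ)-1) * D0) = (2*(n:ℝ)-1) * D0 := by
          linear_combination ((-4)*(2*(n:ℝ)-1)*D0) * hs
        linarith [h, e]
      have hu' : (3-2*s2) * (2*(n:ℝ)^2 * D1) ≤ (2*(n:ℝ)^2-(n:ℝ)+2) * D0 := by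
        have h := mul_le_mul_of_nonneg_left hu h3s
        have e : (3-2*s2) * ((3+2*s2)*(2*(n:ℝ)^2-(n:ℝ)+2) * D0)
            = (2*(n:ℝ)^2-(n:ℝ)+2) * D0 := by
          linear_combination ((-4)*(2*(n:ℝ)^2-(n:ℝ)+2)*D0) * hs
        linarith [h, e]
      push_cast
      constructor
      · -- lower bound at n+1
        have hA : 0 ≤ D1 * ((-15+14*s2) + (-3+10*s2)*((n:ℝ)-1)) := by
          have : (0:ℝ) ≤ (-15+14*s2) + (-3+10*s2)*((n:ℝ)-1) := by nlinarith
          exact mul_nonneg hD1.le this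
        have hc : (0:ℝ) < (2*(n:ℝ)-1)*((n:ℝ)+2) := by nlinarith
        have h1 := mul_le_mul_of_nonneg_left hl' (show (0:ℝ) ≤ 2*((n:ℝ)+1)^2 by positivity)
        have h2 : (2*(2*(n:ℝ)-1)*((n:ℝ)+1)) * (((n:ℝ)+2) * D2 + ((n:ℝ)+1) * D0)
            = (2*(2*(n:ℝ)-1)*((n:ℝ)+1)) * (3*(2*(n:ℝ)+3) * D1) := by rw [hrec]
        have key : 0 ≤ ((2*(n:ℝ)-1)*((n:ℝ)+2)) *
            (2*((n:ℝ)+1)*D2 - (3+2*s2)*(2*((n:ℝ)+1)-1)*D1) := by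
          linarith [h1, h2, hA]
        have := (mul_nonneg_iff_of_pos_left hc).mp key
        linarith
      · -- upper bound at n+1
        have hB : 0 ≤ D1 * ((-48+80*s2) + (-51+94*s2)*((n:ℝ)-1) + (44*s2)*((n:ℝ)-1)^2
            + (3+6*s2)*((n:ℝ)-1)^3) := by
          have : (0:ℝ) ≤ (-48+80*s2) + (-51+94*s2)*((n:ℝ)-1) + (44*s2)*((n:ℝ)-1)^2
              + (3+6*s2)*((n:ℝ)-1)^3 := by
            nlinarith [mul_nonneg hm hm, mul_nonneg (mul_nonneg hm hm) hm]
          exact mul_nonneg hD1.le this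
        have hc : (0:ℝ) < ((n:ℝ)+2)*(2*(n:ℝ)^2-(n:ℝ)+2) := by nlinarith
        have h1 := mul_le_mul_of_nonneg_left hu' (show (0:ℝ) ≤ 2*((n:ℝ)+1)^3 by positivity)
        have h2 : (2*((n:ℝ)+1)^2*(2*(n:ℝ)^2-(n:ℝ)+2)) * (((n:ℝ)+2) * D2 + ((n:ℝ)+1) * D0)
            = (2*((n:ℝ)+1)^2*(2*(n:ℝ)^2-(n:ℝ)+2)) * (3*(2*(n:ℝ)+3) * D1) := by rw [hrec]
        have key : 0 ≤ (((n:ℝ)+2)*(2*(n:ℝ)^2-(n:ℝ)+2)) *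
            ((3+2*s2)*(2*((n:ℝ)+1)^2-((n:ℝ)+1)+2)*D1 - 2*((n:ℝ)+1)^2*D2) := by
          linarith [h1, h2, hB]
        have := (mul_nonneg_iff_of_pos_left hc).mp key
        linarith

lemma sq_bound : ∀ n : ℕ, 2 ≤ n →
    (delannoy n : ℝ)^2 * ((n:ℝ)+3)^2 ≤ 2 * (3+2*s2)^(2*n) * (n:ℝ) := by
  intro n hn
  induction n, hn using Nat.le_induction with
  | base =>
      rw [delannoy_two]
      have e : (3+2*s2)^(2*2) = 577+408*s2 := by
        linear_combination (16*s2^2+96*s2+248) * s2_sq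
      rw [e]
      norm_num
      nlinarith [s2_lb]
  | succ n hn ih =>
      have hn' : 1 ≤ n := by omega
      have hn1 : (1:ℝ) ≤ (n:ℝ) := by exact_mod_cast hn'
      have hu := (ratio_bounds n hn').2
      set D0 : ℝ := (delannoy n : ℝ)
      set D1 : ℝ := (delannoy (n+1) : ℝ)
      have hD0 : 0 < D0 := dpos n
      have hD1 : 0 < D1 := dpos (n+1)
      have hs2n : (0:ℝ) < (3+2*s2)^(2*n) := by positivity
      have hm : (0:ℝ) ≤ (n:ℝ) - 2 := by
        have h2 : (2:ℝ) ≤ (n:ℝ) := by exact_mod_cast hn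
        linarith
      -- square the ratio upper bound
      have hsq : (2*(n:ℝ)^2 * D1)^2 ≤ ((3+2*s2)*(2*(n:ℝ)^2-(n:ℝ)+2) * D0)^2 := by
        exact pow_le_pow_left₀ (by positivity) hu 2
      -- the pure polynomial inequality C'
      have hC : (n:ℝ)*((n:ℝ)+4)^2*(2*(n:ℝ)^2-(n:ℝ)+2)^2
          ≤ 4*(n:ℝ)^4*((n:ℝ)+3)^2*((n:ℝ)+1) := by
        nlinarith [hm, mul_nonneg hm hm, mul_nonneg (mul_nonneg hm hm) hm,
          mul_nonneg (mul_nonneg (mul_nonneg hm hm) hm) hm,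
          mul_nonneg (mul_nonneg (mul_nonneg (mul_nonneg hm hm) hm) hm) hm]
      -- chain
      have t1 : (((n:ℝ)+4)^2) * ((2*(n:ℝ)^2 * D1)^2)
          ≤ (((n:ℝ)+4)^2) * (((3+2*s2)*(2*(n:ℝ)^2-(n:ℝ)+2) * D0)^2) :=
        mul_le_mul_of_nonneg_left hsq (by positivity)
      have t2 : ((3+2*s2)^2*(2*(n:ℝ)^2-(n:ℝ)+2)^2*((n:ℝ)+4)^2) * (D0^2 * ((n:ℝ)+3)^2)
          ≤ ((3+2*s2)^2*(2*(n:ℝ)^2-(n:ℝ)+2)^2*((n:ℝ)+4)^2) * (2 * (3+2*s2)^(2*n) * (n:ℝ)) :=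
        mul_le_mul_of_nonneg_left ih (by positivity)
      have t3 : (2*(3+2*s2)^(2*n)*(3+2*s2)^2) * ((n:ℝ)*((n:ℝ)+4)^2*(2*(n:ℝ)^2-(n:ℝ)+2)^2)
          ≤ (2*(3+2*s2)^(2*n)*(3+2*s2)^2) * (4*(n:ℝ)^4*((n:ℝ)+3)^2*((n:ℝ)+1)) :=
        mul_le_mul_of_nonneg_left hC (by positivity)
      have hpow : (3+2*s2)^(2*(n+1)) = (3+2*s2)^(2*n) * (3+2*s2)^2 := by
        rw [show 2*(n+1) = 2*n+2 by ring, pow_add]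
      have key : (D1^2 * (((n:ℝ)+1)+3)^2) * (4*(n:ℝ)^4*((n:ℝ)+3)^2)
          ≤ (2 * ((3+2*s2)^(2*n)*(3+2*s2)^2) * ((n:ℝ)+1)) * (4*(n:ℝ)^4*((n:ℝ)+3)^2) := by
        push_cast
        nlinarith [t1, t2, t3]
      have hc : (0:ℝ) < 4*(n:ℝ)^4*((n:ℝ)+3)^2 := by positivity
      have := le_of_mul_le_mul_right key hc
      push_cast
      rw [hpow]
      push_cast at this
      linarith

lemma log_ratio_lb (n : ℕ) (hn : 1 ≤ n) :
    Real.log (3+2*s2) - 1/(n:ℝ)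
      ≤ Real.log (delannoy (n+1)) - Real.log (delannoy n) := by
  have hn1 : (1:ℝ) ≤ (n:ℝ) := by exact_mod_cast hn
  have hl := (ratio_bounds n hn).1
  have hD0 := dpos n
  have hD1 := dpos (n+1)
  have hsl := s2_lb
  have ha : (0:ℝ) < 3+2*s2 := by linarith
  have hq : (3+2*s2)*((2*(n:ℝ)-1)/(2*(n:ℝ))) ≤ (delannoy (n+1) : ℝ)/(delannoy n : ℝ) := by
    rw [mul_div_assoc', div_le_div_iff₀ (by positivity) hD0]
    nlinarith [hl]
  have hlog := Real.log_le_log (by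
    apply mul_pos ha
    apply div_pos (by linarith) (by positivity)) hq
  rw [Real.log_div hD1.ne' hD0.ne',
    Real.log_mul ha.ne' (by
      have : (0:ℝ) < (2*(n:ℝ)-1)/(2*(n:ℝ)) := div_pos (by linarith) (by positivity)
      exact this.ne')] at hlog
  have h6 : Real.log ((2*(n:ℝ)-1)/(2*(n:ℝ))) = - Real.log ((2*(n:ℝ))/(2*(n:ℝ)-1)) := by
    rw [← Real.log_inv, inv_div]
  have h5 : Real.log ((2*(n:ℝ))/(2*(n:ℝ)-1)) ≤ 1/(n:ℝ) := by
    have hp : (0:ℝ) < (2*(n:ℝ))/(2*(n:ℝ)-1) := div_pos (by linarith) (by linarith)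
    have h := Real.log_le_sub_one_of_pos hp
    have e : (2*(n:ℝ))/(2*(n:ℝ)-1) - 1 = 1/(2*(n:ℝ)-1) := by
      have hz : (2*(n:ℝ)-1) ≠ 0 := by linarith
      field_simp
      ring
    have e2 : 1/(2*(n:ℝ)-1) ≤ 1/(n:ℝ) := by
      apply one_div_le_one_div_of_le (by linarith)
      linarith
    rw [e] at h
    linarith
  linarith [hlog]

lemma log_step_ub (n : ℕ) (hn : 1 ≤ n) :
    Real.log (delannoy (n+2)) + Real.log (delannoy n)
      - 2*Real.log (delannoy (n+1)) ≤ 3/(n:ℝ)^2 := by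
  have hn1 : (1:ℝ) ≤ (n:ℝ) := by exact_mod_cast hn
  have hu1 := (ratio_bounds (n+1) (by omega)).2
  have hl0 := (ratio_bounds n hn).1
  push_cast at hu1
  have hD0 := dpos n
  have hD1 := dpos (n+1)
  have hD2 := dpos (n+2)
  have hsl := s2_lb
  have ha : (0:ℝ) < 3+2*s2 := by linarith
  set D0 : ℝ := (delannoy n : ℝ)
  set D1 : ℝ := (delannoy (n+1) : ℝ)
  set D2 : ℝ := (delannoy (n+2) : ℝ)
  have hmul := mul_le_mul hu1 hl0
    (mul_nonneg (mul_nonneg ha.le (by linarith)) hD0.le)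
    (mul_nonneg (mul_nonneg ha.le (by nlinarith)) hD1.le)
  have hpoly : (n:ℝ)^3*(2*((n:ℝ)+1)^2-((n:ℝ)+1)+2)
      ≤ ((n:ℝ)^2+3)*((n:ℝ)+1)^2*(2*(n:ℝ)-1) := by nlinarith [hn1, sq_nonneg ((n:ℝ)-1)]
  have t0 := mul_le_mul_of_nonneg_left hmul (show (0:ℝ) ≤ (n:ℝ)^2 by positivity)
  have t2 := mul_le_mul_of_nonneg_left hpoly
    (show (0:ℝ) ≤ 2*(3+2*s2)*(D1*D1) by positivity)
  have hc : (0:ℝ) < 2*(3+2*s2)*((n:ℝ)+1)^2*(2*(n:ℝ)-1) :=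
    mul_pos (mul_pos (by linarith) (by positivity)) (by linarith)
  have keyc : (2*(3+2*s2)*((n:ℝ)+1)^2*(2*(n:ℝ)-1)) * ((n:ℝ)^2*(D2*D0))
      ≤ (2*(3+2*s2)*((n:ℝ)+1)^2*(2*(n:ℝ)-1)) * (((n:ℝ)^2+3)*(D1*D1)) := by
    nlinarith [t0, t2]
  have key := le_of_mul_le_mul_left keyc hc
  have hq : (D2*D0)/(D1*D1) ≤ ((n:ℝ)^2+3)/(n:ℝ)^2 := by
    rw [div_le_div_iff₀ (by positivity) (by positivity)]
    nlinarith [key]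
  have hlog := Real.log_le_log (by positivity) hq
  rw [Real.log_div (by positivity) (by positivity), Real.log_mul hD2.ne' hD0.ne',
    Real.log_mul hD1.ne' hD1.ne'] at hlog
  have h2 : Real.log (((n:ℝ)^2+3)/(n:ℝ)^2) ≤ 3/(n:ℝ)^2 := by
    have h := Real.log_le_sub_one_of_pos (show (0:ℝ) < ((n:ℝ)^2+3)/(n:ℝ)^2 by positivity)
    have e : ((n:ℝ)^2+3)/(n:ℝ)^2 - 1 = 3/(n:ℝ)^2 := by field_simp; ring
    linarith [h, e.ge, e.le]
  linarith [hlog]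

lemma log_ub (n : ℕ) (hn : 2 ≤ n) :
    2*Real.log (delannoy n) + Real.log (n:ℝ)
      ≤ Real.log 2 + (2*(n:ℝ))*Real.log (3+2*s2) := by
  have hn1 : (2:ℝ) ≤ (n:ℝ) := by exact_mod_cast hn
  have hsb := sq_bound n hn
  have hD := dpos n
  have hsl := s2_lb
  have ha : (0:ℝ) < 3+2*s2 := by linarith
  have h1 : (delannoy n : ℝ)^2 * (n:ℝ) * (n:ℝ) ≤ 2 * (3+2*s2)^(2*n) * (n:ℝ) := by
    nlinarith [hsb, sq_nonneg (delannoy n : ℝ), hD]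
  have h2 : (delannoy n : ℝ)^2 * (n:ℝ) ≤ 2 * (3+2*s2)^(2*n) :=
    le_of_mul_le_mul_right h1 (by linarith)
  have hlog := Real.log_le_log (by positivity) h2
  rw [Real.log_mul (by positivity) (by positivity), Real.log_mul (by norm_num) (by positivity),
    Real.log_pow, Real.log_pow] at hlog
  push_cast at hlog
  linarith [hlog]

theorem delannoy_root_ratio_eventually_strictAnti :
    ∃ n₀ : ℕ,
      StrictAntiOn
        (fun n : ℕ =>
          ((delannoy (n + 1) : ℝ)) ^ (((n : ℝ) + 1)⁻¹) /
            ((delannoy n : ℝ)) ^ ((n : ℝ)⁻¹))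
        {n : ℕ | n₀ ≤ n} := by
  obtain ⟨N, hN⟩ := exists_nat_ge (Real.exp 9)
  refine ⟨N + 2, ?_⟩
  set g : ℕ → ℝ := fun n =>
    (((n:ℝ)+1))⁻¹ * Real.log (delannoy (n+1)) - ((n:ℝ))⁻¹ * Real.log (delannoy n) with hg
  have hf : ∀ n : ℕ, (delannoy (n+1) : ℝ) ^ (((n:ℝ)+1)⁻¹) / (delannoy n : ℝ) ^ ((n:ℝ)⁻¹)
      = Real.exp (g n) := by
    intro n
    rw [Real.rpow_def_of_pos (dpos (n+1)), Real.rpow_def_of_pos (dpos n), ← Real.exp_sub]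
    simp only [hg]
    push_cast
    ring_nf
  have hdec : ∀ n : ℕ, N + 2 ≤ n → g (n+1) < g n := by
    intro n hn
    have hn2 : 2 ≤ n := by omega
    have hn1 : (1:ℝ) ≤ (n:ℝ) := by exact_mod_cast (by omega : 1 ≤ n)
    have hn0 : ((n:ℝ)) ≠ 0 := by linarith
    have hnN : (N:ℝ) ≤ (n:ℝ) := by exact_mod_cast (by omega : N ≤ n)
    have hlogn : (9:ℝ) ≤ Real.log n := by
      rw [Real.le_log_iff_exp_le (by linarith)]
      linarith
    have hlog2 : Real.log 2 < 0.6931471808 := Real.log_two_lt_d9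
    have A := log_ratio_lb n (by omega)
    have B := log_step_ub n (by omega)
    have C := log_ub n hn2
    set S0 : ℝ := Real.log (delannoy n)
    set S1 : ℝ := Real.log (delannoy (n+1))
    set S2 : ℝ := Real.log (delannoy (n+2))
    have m1 : 2*(n:ℝ)*Real.log (3+2*s2) - 2 ≤ 2*(n:ℝ)*(S1 - S0) := by
      have h := mul_le_mul_of_nonneg_left A (show (0:ℝ) ≤ 2*(n:ℝ) by linarith)
      have e1 : 2*(n:ℝ)*(Real.log (3+2*s2) - 1/(n:ℝ))
          = 2*(n:ℝ)*Real.log (3+2*s2) - 2 := by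
        field_simp
      linarith [h, e1.le, e1.ge]
    have m2 : (n:ℝ)*((n:ℝ)+1)*(S2 + S0 - 2*S1) ≤ 6 := by
      have h := mul_le_mul_of_nonneg_left B (show (0:ℝ) ≤ (n:ℝ)*((n:ℝ)+1) by positivity)
      have e2 : (n:ℝ)*((n:ℝ)+1)*(3/(n:ℝ)^2) = 3*((n:ℝ)+1)/(n:ℝ) := by
        field_simp
      have e3 : 3*((n:ℝ)+1)/(n:ℝ) ≤ 6 := by
        rw [div_le_iff₀ (by linarith)]
        linarith
      calc (n:ℝ)*((n:ℝ)+1)*(S2 + S0 - 2*S1) ≤ (n:ℝ)*((n:ℝ)+1)*(3/(n:ℝ)^2) := by linarith [h]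
        _ = 3*((n:ℝ)+1)/(n:ℝ) := e2
        _ ≤ 6 := e3
    have hD : 0 < ((n:ℝ)^2+3*(n:ℝ))*(S1 - S0) - (n:ℝ)*((n:ℝ)+1)*(S2 - S1) - 2*S0 := by
      nlinarith [m1, m2, C, hlogn, hlog2]
    have hid : (n:ℝ)*((n:ℝ)+1)*((n:ℝ)+2)*(g n - g (n+1))
        = ((n:ℝ)^2+3*(n:ℝ))*(S1 - S0) - (n:ℝ)*((n:ℝ)+1)*(S2 - S1) - 2*S0 := by
      simp only [hg]
      push_cast
      have h1 : ((n:ℝ)+1) ≠ 0 := by linarith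
      have h2 : ((n:ℝ)+2) ≠ 0 := by linarith
      field_simp
      ring
    have hpos : 0 < (n:ℝ)*((n:ℝ)+1)*((n:ℝ)+2)*(g n - g (n+1)) := by rw [hid]; exact hD
    have hc : (0:ℝ) < (n:ℝ)*((n:ℝ)+1)*((n:ℝ)+2) := by positivity
    by_contra hcon
    push_neg at hcon
    nlinarith [hpos, hc, mul_nonneg hc.le (sub_nonneg.mpr hcon)]
  intro x hx y hy hxy
  simp only [Set.mem_setOf_eq] at hx hy
  have key : ∀ d : ℕ, g (x + d + 1) < g x := by
    intro d
    induction d with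
    | zero => exact hdec x hx
    | succ d ih => exact lt_trans (hdec (x+d+1) (by omega)) ih
  obtain ⟨d, rfl⟩ : ∃ d, y = x + d + 1 := ⟨y - x - 1, by omega⟩
  simp only
  rw [hf, hf]
  exact Real.exp_lt_exp.2 (key d)
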